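/- Let C be a small ℂ-linear category, n ≥ 1, and ψ ∈ CN^n(C) with bψ ∈ C^{n+1}_λ(C) (i.e., (1−λ_{n+1})(bψ) = 0). Then Bψ ∈ Z^{n−1}_λ(C), i.e., b(Bψ) = 0 and (1−λ_{n−1})(Bψ) = 0. -/

import Mathlib

open CategoryTheory

noncomputable section

namespace CFM

universe v u

variable (C : Type u) [Category.{v} C]

/-- A composable chain of morphisms `(f⁰, f¹, …, fⁿ)` with `fⁱ : Xᵢ₊₁ ⟶ Xᵢ`;
`Chain C X Y` consists of chains with innermost source `X` and outermost target `Y`;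
`f⁰` is the outermost morphism. -/
inductive Chain : C → C → Type (max u v)
  | single : {X Y : C} → (X ⟶ Y) → Chain X Y
  | cons : {X Y Z : C} → (Y ⟶ Z) → Chain X Y → Chain X Z

namespace Chain

variable {C}

/-- Number of morphisms in the chain. -/
def size : {X Y : C} → Chain C X Y → ℕ
  | _, _, single _ => 1
  | _, _, cons _ c => c.size + 1

theorem one_le_size {X Y : C} (c : Chain C X Y) : 1 ≤ c.size := by
  induction c with
  | single f => simp [size]
  | cons f c ih => simp [size]

/-- Append a morphism at the inner end of a chain. -/
def snoc : {V X Y : C} → Chain C X Y → (V ⟶ X) → Chain C V Y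
  | _, _, _, single f, g => cons f (single g)
  | _, _, _, cons f c, g => cons f (snoc c g)

/-- Compose the morphisms in slots `i` and `i+1` of the chain (`fⁱ ∘ fⁱ⁺¹`). -/
def composeAt : {X Y : C} → ℕ → Chain C X Y → Chain C X Y
  | _, _, _, single f => single f
  | _, _, 0, cons f (single g) => single (g ≫ f)
  | _, _, 0, cons f (cons g c) => cons (g ≫ f) c
  | _, _, (i+1), cons f c => cons f (composeAt i c)

end Chain

/-- A cyclically composable tuple `(f⁰, …, fⁿ)`, i.e. an element of the cyclic nerve:
a chain from some object back to itself. -/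
def CycChain := Σ X : C, Chain C X X

/-- A function on the cyclic nerve of `C`; an element of `CN^n(C)` is (the multilinear
extension of) such a function, evaluated on tuples of size `n+1`. -/
def Cochain := CycChain C → ℂ

variable {C}

/-- The inverse cyclic rotation `(f⁰, …, fⁿ) ↦ (f¹, …, fⁿ, f⁰)`. -/
def rotInv : CycChain C → CycChain C
  | ⟨X, Chain.single f⟩ => ⟨X, Chain.single f⟩
  | ⟨_, Chain.cons f c⟩ => ⟨_, c.snoc f⟩

/-- The cyclic rotation `(f⁰, …, fⁿ) ↦ (fⁿ, f⁰, …, fⁿ⁻¹)`. -/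
def rot (t : CycChain C) : CycChain C := rotInv^[t.2.size - 1] t

/-- The (unsigned) cyclic operator: `(τφ)(f⁰⊗…⊗fⁿ) = φ(fⁿ⊗f⁰⊗…⊗fⁿ⁻¹)`. -/
def tauOp (φ : Cochain C) : Cochain C := fun t => φ (rot t)

/-- The signed cyclic operator `λₙ = (-1)ⁿ τₙ` on `CN^n(C)`. -/
def lamOp (n : ℕ) (φ : Cochain C) : Cochain C := fun t => (-1 : ℂ) ^ n * φ (rot t)

/-- The operator `A = 1 + λₙ + λₙ² + ⋯ + λₙⁿ` on `CN^n(C)`. -/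
def AOp (n : ℕ) (φ : Cochain C) : Cochain C :=
  fun t => ∑ k ∈ Finset.range (n + 1), (-1 : ℂ) ^ (n * k) * φ (rot^[k] t)

/-- The Hochschild coboundary `b : CN^n(C) → CN^{n+1}(C)`:
`(bφ)(f⁰⊗…⊗fⁿ⁺¹) = Σᵢ (-1)ⁱ φ(f⁰⊗…⊗fⁱfⁱ⁺¹⊗…⊗fⁿ⁺¹) + (-1)ⁿ⁺¹ φ(fⁿ⁺¹f⁰⊗f¹⊗…⊗fⁿ)`. -/
def bOp (n : ℕ) (φ : Cochain C) : Cochain C := fun t =>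
  (∑ i ∈ Finset.range (n + 1), (-1 : ℂ) ^ i * φ ⟨t.1, Chain.composeAt i t.2⟩) +
    (-1 : ℂ) ^ (n + 1) * φ ⟨(rot t).1, Chain.composeAt 0 (rot t).2⟩

/-- The truncated Hochschild coboundary `b'` (the last, cyclic, face omitted). -/
def b'Op (n : ℕ) (φ : Cochain C) : Cochain C := fun t =>
  ∑ i ∈ Finset.range (n + 1), (-1 : ℂ) ^ i * φ ⟨t.1, Chain.composeAt i t.2⟩

/-- The operator `B₀ : CN^{n+1}(C) → CN^n(C)`:
`(B₀φ)(f⁰⊗…⊗fⁿ) = φ(id⊗f⁰⊗…⊗fⁿ) - (-1)ⁿ⁺¹ φ(f⁰⊗…⊗fⁿ⊗id)`. -/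
def B0Op (n : ℕ) (φ : Cochain C) : Cochain C := fun t =>
  φ ⟨t.1, Chain.cons (𝟙 t.1) t.2⟩ - (-1 : ℂ) ^ (n + 1) * φ ⟨t.1, t.2.snoc (𝟙 t.1)⟩

/-- Connes' operator `B = A ∘ B₀ : CN^{n+1}(C) → CN^n(C)`. -/
def BOp (n : ℕ) (φ : Cochain C) : Cochain C := AOp n (B0Op n φ)


section Aux

variable {C : Type u} [Category.{v} C]

namespace Chain

/-- Concatenation of chains: `append c d` puts `d` inside `c`. -/
def append : {X Y Z : C} → Chain C Y Z → Chain C X Y → Chain C X Z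
  | _, _, _, single f, d => cons f d
  | _, _, _, cons f c, d => cons f (append c d)

@[simp] theorem append_single {X Y Z : C} (f : Y ⟶ Z) (d : Chain C X Y) :
    append (single f) d = cons f d := by rw [append]

@[simp] theorem append_cons {W X Y Z : C} (f : Y ⟶ Z) (c : Chain C X Y) (d : Chain C W X) :
    append (cons f c) d = cons f (append c d) := by rw [append]

theorem snoc_eq_append {V X Y : C} (c : Chain C X Y) (g : V ⟶ X) :
    c.snoc g = append c (single g) := by
  induction c with
  | single f => simp [snoc]
  | cons f c ih => simp [snoc, ih]

theorem append_assoc {U W X Y : C} (c : Chain C X Y) (d : Chain C W X) (e : Chain C U W) :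
    append (append c d) e = append c (append d e) := by
  induction c with
  | single f => simp
  | cons f c ih => simp [ih]

theorem size_append {W X Y : C} (c : Chain C X Y) (d : Chain C W X) :
    (append c d).size = c.size + d.size := by
  induction c with
  | single f => simp [size]; omega
  | cons f c ih => simp [size, ih]; omega

@[simp] theorem size_snoc {V X Y : C} (c : Chain C X Y) (g : V ⟶ X) :
    (c.snoc g).size = c.size + 1 := by
  simp [snoc_eq_append, size_append, size]

theorem cons_snoc {V X Y Z : C} (f : Y ⟶ Z) (c : Chain C X Y) (g : V ⟶ X) :
    cons f (c.snoc g) = (cons f c).snoc g := by rw [snoc]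

theorem exists_snoc {X Y : C} (w : Chain C X Y) (h : 2 ≤ w.size) :
    ∃ (Z : C) (c : Chain C Z Y) (g : X ⟶ Z), w = c.snoc g := by
  induction w with
  | single f => simp [size] at h
  | cons f c ih =>
    cases c with
    | single g => exact ⟨_, single f, g, by rw [snoc]⟩
    | cons g d =>
      obtain ⟨Z, c', h', hc⟩ := ih (by have := d.one_le_size; simp [size]; omega)
      exact ⟨Z, cons f c', h', by rw [hc, cons_snoc]⟩

end Chain

open Chain

@[simp] theorem rotInv_single {X Y : C} (f : X ⟶ X) :
    rotInv (⟨X, Chain.single f⟩ : CycChain C) = ⟨X, Chain.single f⟩ := rfl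

@[simp] theorem rotInv_cons {X Y : C} (f : Y ⟶ X) (c : Chain C X Y) :
    rotInv (⟨X, Chain.cons f c⟩ : CycChain C) = ⟨Y, c.snoc f⟩ := rfl

theorem size_rotInv (t : CycChain C) : (rotInv t).2.size = t.2.size := by
  obtain ⟨X, w⟩ := t
  cases w with
  | single f => rfl
  | cons f c => simp [rotInv, Chain.size]

theorem size_rotInv_iter (k : ℕ) (t : CycChain C) :
    (rotInv^[k] t).2.size = t.2.size := by
  induction k with
  | zero => rfl
  | succ k ih => rw [Function.iterate_succ_apply', size_rotInv, ih]

theorem rotInv_iter_append {X Y : C} (c : Chain C Y X) :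
    ∀ (d : Chain C X Y),
      rotInv^[c.size] (⟨X, append c d⟩ : CycChain C) = ⟨Y, append d c⟩ := by
  induction c with
  | single f =>
    intro d
    simp only [size, append_single, Function.iterate_one, rotInv_cons, snoc_eq_append]
    rfl
  | cons f c ih =>
    intro d
    simp only [size]
    erw [Function.iterate_succ_apply, append_cons, rotInv_cons, snoc_eq_append,
      append_assoc, ih (append d (single f)), append_assoc, append_single]

theorem rotInv_iter_size (t : CycChain C) : rotInv^[t.2.size] t = t := by
  obtain ⟨X, w⟩ := t
  cases w with
  | single f => simp only [size, Function.iterate_one, rotInv_single]; rfl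
  | cons f c =>
    simp only [size]
    erw [Function.iterate_succ_apply, rotInv_cons, snoc_eq_append,
      rotInv_iter_append c (single f), append_single]

theorem rot_snoc {X Y : C} (c : Chain C X Y) (g : Y ⟶ X) :
    rot (⟨Y, c.snoc g⟩ : CycChain C) = ⟨X, Chain.cons g c⟩ := by
  show rotInv^[(c.snoc g).size - 1] _ = _
  rw [size_snoc, Nat.add_sub_cancel, snoc_eq_append, rotInv_iter_append c (single g),
    append_single]

theorem size_rot (t : CycChain C) : (rot t).2.size = t.2.size :=
  size_rotInv_iter _ t

theorem size_rot_iter (k : ℕ) (t : CycChain C) :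
    (rot^[k] t).2.size = t.2.size := by
  induction k with
  | zero => rfl
  | succ k ih => rw [Function.iterate_succ_apply', size_rot, ih]

theorem rot_iter_eq_rotInv (k : ℕ) (t : CycChain C) :
    rot^[k] t = rotInv^[k * (t.2.size - 1)] t := by
  induction k with
  | zero => simp
  | succ k ih =>
    rw [Function.iterate_succ_apply', ih, rot, size_rotInv_iter,
      ← Function.iterate_add_apply]
    congr 1
    ring

theorem rotInv_iter_mul_size (j : ℕ) (t : CycChain C) :
    rotInv^[t.2.size * j] t = t := by
  induction j with
  | zero => rfl
  | succ j ih =>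
    rw [Nat.mul_succ, Function.iterate_add_apply, rotInv_iter_size, ih]

theorem rot_size_self (t : CycChain C) : rot^[t.2.size] t = t := by
  rw [rot_iter_eq_rotInv]
  exact rotInv_iter_mul_size _ t

theorem rot_iter_fix (k : ℕ) (t : CycChain C) (h : t.2.size = k) : rot^[k] t = t := by
  subst h; exact rot_size_self t

namespace Chain

@[simp] theorem composeAt_succ_cons {X Y Z : C} (i : ℕ) (f : Y ⟶ Z) (c : Chain C X Y) :
    composeAt (i + 1) (cons f c) = cons f (composeAt i c) := by
  rw [composeAt]

@[simp] theorem composeAt_zero_cons_cons {W X Y Z : C} (f : Y ⟶ Z) (g : W ⟶ Y)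
    (c : Chain C X W) : composeAt 0 (cons f (cons g c)) = cons (g ≫ f) c := by
  rw [composeAt]

@[simp] theorem composeAt_zero_cons_single {X Y Z : C} (f : Y ⟶ Z) (g : X ⟶ Y) :
    composeAt 0 (cons f (single g)) = single (g ≫ f) := by
  rw [composeAt]

theorem composeAt_zero_id_cons {X Y : C} (c : Chain C X Y) :
    composeAt 0 (cons (𝟙 Y) c) = c := by
  cases c with
  | single f => simp
  | cons f c => simp

theorem composeAt_snoc {V X Y : C} (c : Chain C X Y) (g : V ⟶ X) :
    ∀ (i : ℕ), i + 2 ≤ c.size → composeAt i (c.snoc g) = (composeAt i c).snoc g := by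
  induction c with
  | single f => intro i hi; simp [size] at hi
  | cons f c ih =>
    intro i hi
    cases i with
    | zero =>
      cases c with
      | single h => simp [snoc]
      | cons h d => rw [snoc, snoc, composeAt_zero_cons_cons, composeAt_zero_cons_cons, snoc]
    | succ i =>
      rw [snoc, composeAt_succ_cons, composeAt_succ_cons,
        ih i (by simp [size] at hi; omega), snoc]

theorem composeAt_snoc_snoc {U X W V : C} (c : Chain C W V) (h : X ⟶ W) (g : U ⟶ X) :
    composeAt c.size ((c.snoc h).snoc g) = c.snoc (g ≫ h) := by
  induction c with
  | single f => simp [snoc, size]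
  | cons f c ih =>
    simp only [size]
    rw [snoc, snoc, composeAt_succ_cons, ih, snoc]

theorem composeAt_snoc_id {X Y : C} (c : Chain C X Y) :
    ∀ (k : ℕ), c.size = k + 1 → composeAt k (c.snoc (𝟙 X)) = c := by
  induction c with
  | single f =>
    intro k hk
    simp [size] at hk
    subst hk
    simp [snoc]
  | cons f c ih =>
    intro k hk
    simp only [size] at hk
    cases k with
    | zero => have := c.one_le_size; omega
    | succ k =>
      rw [snoc, composeAt_succ_cons, ih k (by omega)]

end Chain

/-- The `j`-th face of a cyclic chain (valid for `j ≤ size - 2`). -/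
def delta (j : ℕ) (t : CycChain C) : CycChain C := ⟨t.1, t.2.composeAt j⟩

/-- The cyclic (last) face of a cyclic chain. -/
def cyc (t : CycChain C) : CycChain C := delta 0 (rot t)

/-- Insert an identity at the outer end. -/
def consId (t : CycChain C) : CycChain C := ⟨t.1, Chain.cons (𝟙 t.1) t.2⟩

/-- Insert an identity at the inner end. -/
def snocId (t : CycChain C) : CycChain C := ⟨t.1, t.2.snoc (𝟙 t.1)⟩

theorem delta_succ_rot (t : CycChain C) (j : ℕ) (hj : j + 3 ≤ t.2.size) :
    delta (j + 1) (rot t) = rot (delta j t) := by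
  obtain ⟨V, w⟩ := t
  obtain ⟨Z, c, g, rfl⟩ := w.exists_snoc (by simp at hj ⊢; omega)
  have hc : j + 2 ≤ c.size := by simp at hj; omega
  rw [rot_snoc]
  show (⟨Z, Chain.composeAt (j+1) (Chain.cons g c)⟩ : CycChain C) = _
  rw [Chain.composeAt_succ_cons]
  show _ = rot ⟨V, Chain.composeAt j (c.snoc g)⟩
  rw [Chain.composeAt_snoc c g j hc, rot_snoc]

theorem rot_single {X : C} (f : X ⟶ X) :
    rot (⟨X, Chain.single f⟩ : CycChain C) = ⟨X, Chain.single f⟩ := by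
  unfold rot
  simp [Chain.size]; rfl

theorem cyc_rot (t : CycChain C) (h : 2 ≤ t.2.size) :
    cyc (rot t) = rot (delta (t.2.size - 2) t) := by
  obtain ⟨V, w⟩ := t
  obtain ⟨Z, c, g, rfl⟩ := w.exists_snoc h
  rw [rot_snoc]
  rcases Nat.lt_or_ge c.size 2 with hc | hc
  · -- c is a single
    cases c with
    | cons f d => exact absurd hc (by have := d.one_le_size; simp [Chain.size]; omega)
    | single f =>
      have e1 : (Chain.single g).snoc f = Chain.cons g (Chain.single f) := by rw [Chain.snoc]
      rw [← e1]; unfold cyc; rw [rot_snoc]; unfold delta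
      have e2 : ((Chain.single f).snoc g).size - 2 = 0 := by simp [Chain.size]
      rw [e2]
      have e3 : (Chain.single f).snoc g = Chain.cons f (Chain.single g) := by rw [Chain.snoc]
      rw [e3]
      simp only [Chain.composeAt_zero_cons_single]
      rw [rot_single]
  · obtain ⟨W, c', h', rfl⟩ := c.exists_snoc hc
    rw [Chain.cons_snoc]; unfold cyc; rw [rot_snoc]; unfold delta
    simp only [Chain.composeAt_zero_cons_cons]
    have e2 : ((c'.snoc h').snoc g).size - 2 = c'.size := by simp
    rw [e2]
    show _ = rot ⟨V, Chain.composeAt c'.size ((c'.snoc h').snoc g)⟩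
    rw [Chain.composeAt_snoc_snoc, rot_snoc]

theorem delta_rot_iter (t : CycChain C) (j k : ℕ) (hj : j + k + 2 ≤ t.2.size) :
    delta (j + k) (rot^[k] t) = rot^[k] (delta j t) := by
  induction k with
  | zero => rfl
  | succ k ih =>
    rw [Function.iterate_succ_apply' rot k t,
      show j + (k + 1) = (j + k) + 1 from rfl,
      delta_succ_rot _ _ (by rw [size_rot_iter]; omega),
      ih (by omega)]
    exact (Function.iterate_succ_apply' rot k _).symm

theorem cyc_rot_iter (t : CycChain C) (e : ℕ) (he1 : 1 ≤ e) (he2 : e + 2 ≤ t.2.size) :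
    cyc (rot^[e] t) = rot^[e] (delta (t.2.size - 1 - e) t) := by
  induction e with
  | zero => omega
  | succ e ih =>
    rw [Function.iterate_succ_apply' rot e t,
      cyc_rot _ (by rw [size_rot_iter]; omega)]
    rcases Nat.eq_zero_or_pos e with rfl | he
    · simp only [Function.iterate_zero, id_eq, Function.iterate_one, size_rot_iter]
      congr 2 <;> omega
    · rw [size_rot_iter]
      have hidx : t.2.size - 2 = (t.2.size - 1 - (e + 1)) + e := by omega
      rw [hidx, delta_rot_iter t _ e (by omega)]
      exact (Function.iterate_succ_apply' rot e _).symm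

theorem neg_one_pow_congr {a b : ℕ} (h : a % 2 = b % 2) : ((-1 : ℂ)) ^ a = (-1) ^ b := by
  rw [← Nat.div_add_mod a 2, ← Nat.div_add_mod b 2, h, pow_add, pow_add, pow_mul, pow_mul]
  norm_num

@[simp] theorem delta_eq (t : CycChain C) (j : ℕ) :
    (⟨t.1, t.2.composeAt j⟩ : CycChain C) = delta j t := rfl

@[simp] theorem cyc_eq (t : CycChain C) :
    (⟨(rot t).1, (rot t).2.composeAt 0⟩ : CycChain C) = cyc t := rfl

theorem dagger_le (t : CycChain C) (j k : ℕ) (hk : k ≤ j) (hj : j + 2 ≤ t.2.size) :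
    delta j (rot^[k] t) = rot^[k] (delta (j - k) t) := by
  conv_lhs => rw [show j = (j - k) + k by omega]
  exact delta_rot_iter t (j - k) k (by omega)

theorem dagger_gt (t : CycChain C) (j k : ℕ) (hk : j < k) (hk2 : k + 1 ≤ t.2.size)
    (hj : j + 2 ≤ t.2.size) :
    delta j (rot^[k] t)
      = rot^[k - 1] (if k = j + 1 then cyc t else delta (t.2.size + j - k) t) := by
  conv_lhs => rw [show k = j + (k - j) by omega, Function.iterate_add_apply]
  have h2 : delta j (rot^[j] (rot^[k - j] t)) = rot^[j] (delta 0 (rot^[k - j] t)) := by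
    have := delta_rot_iter (rot^[k - j] t) 0 j (by rw [size_rot_iter]; omega)
    simpa using this
  rw [h2]
  have h3 : rot^[k - j] t = rot (rot^[k - j - 1] t) := by
    rw [← Function.iterate_succ_apply' rot]
    congr 1
    omega
  rw [h3, show ∀ v : CycChain C, delta 0 (rot v) = cyc v from fun _ => rfl]
  by_cases hk1 : k = j + 1
  · rw [if_pos hk1, show k - j - 1 = 0 by omega]
    simp only [Function.iterate_zero, id_eq]
    congr 1
    omega
  · rw [if_neg hk1, cyc_rot_iter t (k - j - 1) (by omega) (by omega),
      ← Function.iterate_add_apply,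
      show j + (k - j - 1) = k - 1 by omega,
      show t.2.size - 1 - (k - j - 1) = t.2.size + j - k by omega]

theorem bA (m : ℕ) (χ : Cochain C) (t : CycChain C) (ht : t.2.size = m + 2) :
    bOp m (AOp m χ) t = AOp (m + 1) (b'Op m χ) t := by
  have step1 : bOp m (AOp m χ) t
      = ∑ p ∈ Finset.range (m + 2) ×ˢ Finset.range (m + 1),
          (-1 : ℂ) ^ p.1 * ((-1 : ℂ) ^ (m * p.2) *
            χ (rot^[p.2] (if p.1 = m + 1 then cyc t else delta p.1 t))) := by
    rw [Finset.sum_product, Finset.sum_range_succ]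
    simp only [bOp, AOp, delta_eq, cyc_eq]
    congr 1
    · apply Finset.sum_congr rfl
      intro J hJ
      rw [Finset.mul_sum]
      apply Finset.sum_congr rfl
      intro K _
      rw [if_neg (by simp at hJ; omega)]
    · rw [Finset.mul_sum]
      apply Finset.sum_congr rfl
      intro K _
      norm_num [show delta 0 (rot t) = cyc t from rfl]
  have step2 : AOp (m + 1) (b'Op m χ) t
      = ∑ p ∈ Finset.range (m + 2) ×ˢ Finset.range (m + 1),
          (-1 : ℂ) ^ ((m + 1) * p.1) * ((-1 : ℂ) ^ p.2 *
            χ (delta p.2 (rot^[p.1] t))) := by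
    rw [Finset.sum_product]
    simp only [AOp, b'Op, delta_eq]
    apply Finset.sum_congr rfl
    intro k _
    rw [Finset.mul_sum]
  rw [step1, step2]
  refine Finset.sum_nbij'
    (fun q => if q.1 + q.2 ≤ m then (q.2, q.1 + q.2) else (q.2 + 1, q.1 + q.2 - m - 1))
    (fun p => if p.1 ≤ p.2 then (p.2 - p.1, p.1) else (m + 2 + p.2 - p.1, p.1 - 1))
    ?_ ?_ ?_ ?_ ?_
  · intro q hq
    simp only [Finset.mem_product, Finset.mem_range] at hq ⊢
    split_ifs <;> omega
  · intro p hp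
    simp only [Finset.mem_product, Finset.mem_range] at hp ⊢
    split_ifs <;> omega
  · rintro ⟨J, K⟩ hq
    simp only [Finset.mem_product, Finset.mem_range] at hq
    dsimp only
    split_ifs <;> (try simp_all [Prod.mk.injEq]) <;> omega
  · rintro ⟨k, j⟩ hp
    simp only [Finset.mem_product, Finset.mem_range] at hp
    dsimp only
    split_ifs <;> (try simp_all [Prod.mk.injEq]) <;> omega
  · rintro ⟨J, K⟩ hq
    simp only [Finset.mem_product, Finset.mem_range] at hq
    dsimp only
    by_cases hle : J + K ≤ m
    · rw [if_pos hle]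
      dsimp only
      rw [dagger_le t (J + K) K (by omega) (by omega),
        Nat.add_sub_cancel, if_neg (by omega), ← mul_assoc, ← mul_assoc,
        ← pow_add, ← pow_add]
      congr 1
      rw [show (m + 1) * K + (J + K) = (J + m * K) + 2 * K by
          have expand : (m + 1) * K = m * K + K := by ring
          omega]
      simp [pow_add, pow_mul]
    · rw [if_neg hle]
      dsimp only
      rw [dagger_gt t (J + K - m - 1) (K + 1) (by omega) (by omega) (by omega)]
      rw [ht]
      have harg : (if K + 1 = J + K - m - 1 + 1 then cyc t
          else delta (m + 2 + (J + K - m - 1) - (K + 1)) t)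
          = (if J = m + 1 then cyc t else delta J t) := by
        by_cases hJ : J = m + 1
        · rw [if_pos hJ, if_pos (by omega)]
        · rw [if_neg hJ, if_neg (by omega), show m + 2 + (J + K - m - 1) - (K + 1) = J by omega]
      rw [harg, show K + 1 - 1 = K by omega, ← mul_assoc, ← mul_assoc, ← pow_add, ← pow_add]
      congr 1
      rw [show (m + 1) * (K + 1) + (J + K - m - 1) = (J + m * K) + 2 * K by
          have expand : (m + 1) * (K + 1) = m * K + m + K + 1 := by ring
          omega]
      simp [pow_add, pow_mul]

theorem bOp_eq (n : ℕ) (φ : Cochain C) (v : CycChain C) :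
    bOp n φ v = (∑ i ∈ Finset.range (n + 1), (-1 : ℂ) ^ i * φ (delta i v))
      + (-1 : ℂ) ^ (n + 1) * φ (cyc v) := rfl

theorem b'Op_eq (n : ℕ) (φ : Cochain C) (v : CycChain C) :
    b'Op n φ v = ∑ i ∈ Finset.range (n + 1), (-1 : ℂ) ^ i * φ (delta i v) := rfl

theorem B0Op_eq (n : ℕ) (φ : Cochain C) (v : CycChain C) :
    B0Op n φ v = φ (consId v) - (-1 : ℂ) ^ (n + 1) * φ (snocId v) := rfl

theorem AOp_eq (n : ℕ) (φ : Cochain C) (v : CycChain C) :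
    AOp n φ v = ∑ k ∈ Finset.range (n + 1), (-1 : ℂ) ^ (n * k) * φ (rot^[k] v) := rfl

theorem lamOp_eq (n : ℕ) (φ : Cochain C) (v : CycChain C) :
    lamOp n φ v = (-1 : ℂ) ^ n * φ (rot v) := rfl

theorem delta_consId_zero (u : CycChain C) : delta 0 (consId u) = u := by
  obtain ⟨X, w⟩ := u
  show (⟨X, Chain.composeAt 0 (Chain.cons (𝟙 X) w)⟩ : CycChain C) = ⟨X, w⟩
  rw [Chain.composeAt_zero_id_cons]

theorem delta_consId_succ (i : ℕ) (u : CycChain C) :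
    delta (i + 1) (consId u) = consId (delta i u) := by
  obtain ⟨X, w⟩ := u
  show (⟨X, Chain.composeAt (i + 1) (Chain.cons (𝟙 X) w)⟩ : CycChain C)
      = ⟨X, Chain.cons (𝟙 X) (Chain.composeAt i w)⟩
  rw [Chain.composeAt_succ_cons]

theorem cyc_consId (u : CycChain C) (h : 2 ≤ u.2.size) : cyc (consId u) = rot u := by
  obtain ⟨X, w⟩ := u
  obtain ⟨Z, c, g, rfl⟩ := w.exists_snoc h
  show delta 0 (rot ⟨X, Chain.cons (𝟙 X) (c.snoc g)⟩) = _
  rw [Chain.cons_snoc, rot_snoc, rot_snoc]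
  show (⟨Z, Chain.composeAt 0 (Chain.cons g (Chain.cons (𝟙 X) c))⟩ : CycChain C) = _
  rw [Chain.composeAt_zero_cons_cons, Category.id_comp]

theorem delta_snocId (i : ℕ) (u : CycChain C) (h : i + 2 ≤ u.2.size) :
    delta i (snocId u) = snocId (delta i u) := by
  obtain ⟨X, w⟩ := u
  show (⟨X, Chain.composeAt i (w.snoc (𝟙 X))⟩ : CycChain C) = ⟨X, (Chain.composeAt i w).snoc (𝟙 X)⟩
  rw [Chain.composeAt_snoc w (𝟙 X) i h]

theorem delta_snocId_last (k : ℕ) (u : CycChain C) (h : u.2.size = k + 1) :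
    delta k (snocId u) = u := by
  obtain ⟨X, w⟩ := u
  show (⟨X, Chain.composeAt k (w.snoc (𝟙 X))⟩ : CycChain C) = ⟨X, w⟩
  rw [Chain.composeAt_snoc_id w k h]

theorem cyc_snocId (u : CycChain C) : cyc (snocId u) = u := by
  obtain ⟨X, w⟩ := u
  show delta 0 (rot ⟨X, w.snoc (𝟙 X)⟩) = _
  rw [rot_snoc]
  show (⟨X, Chain.composeAt 0 (Chain.cons (𝟙 X) w)⟩ : CycChain C) = _
  rw [Chain.composeAt_zero_id_cons]

theorem key2 (m : ℕ) (ψ : Cochain C) (u : CycChain C) (hu : u.2.size = m + 2) :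
    b'Op m (B0Op m ψ) u + B0Op (m + 1) (bOp (m + 1) ψ) u
      = ψ u - lamOp (m + 1) ψ u := by
  have h2 : 2 ≤ u.2.size := by omega
  have e1 : bOp (m + 1) ψ (consId u)
      = ψ u - (∑ i ∈ Finset.range (m + 1), (-1 : ℂ) ^ i * ψ (consId (delta i u)))
        + (-1 : ℂ) ^ (m + 2) * ψ (rot u) := by
    rw [bOp_eq, Finset.sum_range_succ', cyc_consId u h2]
    have hterm : ∀ i ∈ Finset.range (m + 1),
        (-1 : ℂ) ^ (i + 1) * ψ (delta (i + 1) (consId u))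
          = -((-1 : ℂ) ^ i * ψ (consId (delta i u))) := by
      intro i _
      rw [delta_consId_succ, pow_succ]
      ring
    rw [Finset.sum_congr rfl hterm, Finset.sum_neg_distrib, delta_consId_zero]
    ring
  have e2 : bOp (m + 1) ψ (snocId u)
      = ∑ i ∈ Finset.range (m + 1), (-1 : ℂ) ^ i * ψ (snocId (delta i u)) := by
    rw [bOp_eq, Finset.sum_range_succ, cyc_snocId, delta_snocId_last (m + 1) u (by omega)]
    have hterm : ∀ i ∈ Finset.range (m + 1),
        (-1 : ℂ) ^ i * ψ (delta i (snocId u))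
          = (-1 : ℂ) ^ i * ψ (snocId (delta i u)) := by
      intro i hi
      simp only [Finset.mem_range] at hi
      rw [delta_snocId i u (by omega)]
    rw [Finset.sum_congr rfl hterm, pow_succ]
    ring
  have e3 : b'Op m (B0Op m ψ) u
      = (∑ i ∈ Finset.range (m + 1), (-1 : ℂ) ^ i * ψ (consId (delta i u)))
        - (-1 : ℂ) ^ (m + 1) * ∑ i ∈ Finset.range (m + 1), (-1 : ℂ) ^ i * ψ (snocId (delta i u)) := by
    rw [b'Op_eq, Finset.mul_sum, ← Finset.sum_sub_distrib]
    apply Finset.sum_congr rfl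
    intro i _
    rw [B0Op_eq]
    ring
  rw [show B0Op (m + 1) (bOp (m + 1) ψ) u
      = bOp (m + 1) ψ (consId u) - (-1 : ℂ) ^ (m + 2) * bOp (m + 1) ψ (snocId u) from rfl]
  rw [e1, e2, e3, lamOp_eq, pow_succ, pow_succ]
  ring

theorem B0b_zero (m : ℕ) (ψ : Cochain C)
    (hbψ : ∀ t : CycChain C, t.2.size = m + 3 →
      lamOp (m + 2) (bOp (m + 1) ψ) t = bOp (m + 1) ψ t)
    (u : CycChain C) (hu : u.2.size = m + 2) :
    B0Op (m + 1) (bOp (m + 1) ψ) u = 0 := by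
  have hsz : (snocId u).2.size = m + 3 := by
    obtain ⟨X, w⟩ := u
    have hw : w.size = m + 2 := hu
    show (w.snoc (𝟙 X)).size = m + 3
    rw [Chain.size_snoc]
    omega
  have h := hbψ (snocId u) hsz
  have hrot : rot (snocId u) = consId u := by
    obtain ⟨X, w⟩ := u
    exact rot_snoc w (𝟙 X)
  rw [lamOp_eq, hrot] at h
  rw [B0Op_eq, ← h, ← mul_assoc, ← pow_add,
    Even.neg_one_pow (⟨m + 2, by ring⟩ : Even (m + 2 + (m + 2)))]
  ring

theorem lam_A (m : ℕ) (χ : Cochain C) (t : CycChain C) (ht : t.2.size = m + 1) :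
    lamOp m (AOp m χ) t = AOp m χ t := by
  rw [lamOp_eq, AOp_eq, AOp_eq, Finset.mul_sum]
  have hterm : ∀ k ∈ Finset.range (m + 1),
      (-1 : ℂ) ^ m * ((-1 : ℂ) ^ (m * k) * χ (rot^[k] (rot t)))
        = (-1 : ℂ) ^ (m * (k + 1)) * χ (rot^[k + 1] t) := by
    intro k _
    rw [← Function.iterate_succ_apply rot k t, ← mul_assoc, ← pow_add,
      show m + m * k = m * (k + 1) by ring]
  rw [Finset.sum_congr rfl hterm]
  have hsum := Finset.sum_range_succ' (fun k => (-1 : ℂ) ^ (m * k) * χ (rot^[k] t)) (m + 1)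
  have hsum2 := Finset.sum_range_succ (fun k => (-1 : ℂ) ^ (m * k) * χ (rot^[k] t)) (m + 1)
  have hg0 : (-1 : ℂ) ^ (m * 0) * χ (rot^[0] t) = χ t := by simp
  have hend : (-1 : ℂ) ^ (m * (m + 1)) * χ (rot^[m + 1] t) = χ t := by
    rw [rot_iter_fix (m + 1) t ht, Even.neg_one_pow (Nat.even_mul_succ_self m)]
    ring
  rw [hg0] at hsum
  rw [hend] at hsum2
  exact add_right_cancel (hsum.symm.trans hsum2)

end Aux

/-- Let `n ≥ 1` and `ψ ∈ CN^n(C)` with `bψ ∈ C^{n+1}_λ(C)`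
(i.e. `(1 - λ_{n+1})(bψ) = 0`).  Then `Bψ ∈ Z^{n-1}_λ(C)`: `b(Bψ) = 0` and
`(1 - λ_{n-1})(Bψ) = 0`. -/
theorem Bpsi_is_cyclic_cocycle [Preadditive C] [CategoryTheory.Linear ℂ C]
    (n : ℕ) (hn : 1 ≤ n) (ψ : Cochain C)
    (hbψ : ∀ t : CycChain C, t.2.size = n + 2 →
      lamOp (n + 1) (bOp n ψ) t = bOp n ψ t) :
    (∀ t : CycChain C, t.2.size = n + 1 → bOp (n - 1) (BOp (n - 1) ψ) t = 0) ∧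
    (∀ t : CycChain C, t.2.size = n → lamOp (n - 1) (BOp (n - 1) ψ) t = BOp (n - 1) ψ t) := by
  obtain ⟨m, rfl⟩ : ∃ m, n = m + 1 := ⟨n - 1, by omega⟩
  simp only [Nat.add_sub_cancel]
  constructor
  · intro t ht
    rw [show BOp m ψ = AOp m (B0Op m ψ) from rfl,
      bA m (B0Op m ψ) t (by omega), AOp_eq]
    have hterm : ∀ k ∈ Finset.range (m + 2),
        (-1 : ℂ) ^ ((m + 1) * k) * b'Op m (B0Op m ψ) (rot^[k] t)
          = (-1 : ℂ) ^ ((m + 1) * k) * ψ (rot^[k] t)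
            - (-1 : ℂ) ^ ((m + 1) * (k + 1)) * ψ (rot^[k + 1] t) := by
      intro k _
      have hsz : (rot^[k] t).2.size = m + 2 := by rw [size_rot_iter]; omega
      have hk2 := key2 m ψ (rot^[k] t) hsz
      have hz := B0b_zero m ψ hbψ (rot^[k] t) hsz
      have hb' : b'Op m (B0Op m ψ) (rot^[k] t)
          = ψ (rot^[k] t) - lamOp (m + 1) ψ (rot^[k] t) := by
        linear_combination hk2 - hz
      rw [hb', lamOp_eq, ← Function.iterate_succ_apply' rot k t,
        show (m + 1) * (k + 1) = (m + 1) * k + (m + 1) by ring, pow_add]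
      ring
    rw [Finset.sum_congr rfl hterm]
    have htel := Finset.sum_range_sub'
      (fun k => (-1 : ℂ) ^ ((m + 1) * k) * ψ (rot^[k] t)) (m + 2)
    rw [htel, rot_iter_fix (m + 2) t (by omega),
      Even.neg_one_pow (Nat.even_mul_succ_self (m + 1))]
    simp
  · intro t ht
    exact lam_A m (B0Op m ψ) t (by omega)

end CFM
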